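/- arXiv:math/0001074 — 5 statements merged into one kernel-verified Lean document; each statement's English description precedes it below -/
import Mathlib

section
/- Let X be a countable discrete metric space. If there exists a sequence of positive definite functions in C₀(X×X;Δ) which forms an approximate unit for C₀(X×X;Δ), then there exists a metrically proper negative type function on X × X. -/
open scoped ComplexConjugate ComplexOrder

/-- `f : X × X → ℂ` is positive definite. -/
def IsPositiveDefinite {X : Type*} (f : X → X → ℂ) : Prop :=
  ∀ (n : ℕ) (x : Fin n → X) (z : Fin n → ℂ),
    0 ≤ ∑ i, ∑ j, conj (z i) * f (x i) (x j) * z j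

/-- `h : X × X → ℝ` is of negative type. -/
def IsNegativeType {X : Type*} (h : X → X → ℝ) : Prop :=
  (∀ x, h x x = 0) ∧ (∀ x y, h x y = h y x) ∧
    ∀ (n : ℕ) (x : Fin n → X) (a : Fin n → ℝ),
      (∑ j, a j) = 0 → (∑ i, ∑ j, a i * h (x i) (x j) * a j) ≤ 0

/-- `f` is metrically proper with respect to the distance function `d`. -/
def MetricallyProperWith {X E : Type*} [Norm E] (d : X → X → ℝ) (f : X → X → E) : Prop :=
  ∀ C > 0, ∃ R > 0, ∀ x y, d x y > R → C < ‖f x y‖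

/-- `f` belongs to `C₀(X×X; Δ)`: it is bounded and tends to zero away from the diagonal. -/
def MemC0Delta {X : Type*} (d : X → X → ℝ) (f : X → X → ℂ) : Prop :=
  (∃ M, ∀ x y, ‖f x y‖ ≤ M) ∧
    ∀ ε > 0, ∃ R > 0, ∀ x y, d x y > R → ‖f x y‖ < ε

/-- The sequence `u` consists of elements of `C₀(X×X; Δ)` and is an approximate unit for it:
`‖u n · f − f‖_∞ → 0` for every `f ∈ C₀(X×X; Δ)`. -/
def IsApproximateUnit {X : Type*} (d : X → X → ℝ) (u : ℕ → X → X → ℂ) : Prop :=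
  (∀ n, MemC0Delta d (u n)) ∧
    ∀ f, MemC0Delta d f → ∀ ε > 0, ∃ N, ∀ n ≥ N, ∀ x y, ‖u n x y * f x y - f x y‖ < ε

lemma re_term_eq (w : ℂ) (p q : ℝ) :
    ((starRingEnd ℂ) (p : ℂ) * w * (q : ℂ)).re = p * w.re * q := by
  simp only [Complex.conj_ofReal, Complex.mul_re, Complex.ofReal_re, Complex.ofReal_im,
    mul_zero, zero_mul, sub_zero]

lemma posdef_re_quad {X : Type*} {f : X → X → ℂ} (hf : IsPositiveDefinite f)
    (n : ℕ) (x : Fin n → X) (a : Fin n → ℝ) :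
    0 ≤ ∑ i, ∑ j, a i * (f (x i) (x j)).re * a j := by
  have h := hf n x (fun i => (a i : ℂ))
  rw [Complex.le_def] at h
  have hre := h.1
  rw [Complex.zero_re, Complex.re_sum] at hre
  calc (0:ℝ) ≤ ∑ i, (∑ j, (starRingEnd ℂ) ((a i : ℂ)) * f (x i) (x j) * (a j : ℂ)).re := hre
    _ = ∑ i, ∑ j, a i * (f (x i) (x j)).re * a j := by
        refine Finset.sum_congr rfl fun i _ => ?_
        rw [Complex.re_sum]
        exact Finset.sum_congr rfl fun j _ => re_term_eq _ _ _

lemma posdef_two {X : Type*} {f : X → X → ℂ} (hf : IsPositiveDefinite f) (x y : X) :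
    0 ≤ (f x x).re + (f y y).re - (f x y).re - (f y x).re := by
  have h := hf 2 ![x, y] ![1, -1]
  rw [Complex.le_def] at h
  have hre := h.1
  simp [Fin.sum_univ_two, Complex.add_re, Complex.sub_re, Complex.neg_re] at hre
  linarith

theorem proper_negative_type_of_approximate_unit_of_posdef
    (X : Type*) [MetricSpace X] [DiscreteTopology X] [Countable X]
    (u : ℕ → X → X → ℂ) (hpd : ∀ n, IsPositiveDefinite (u n))
    (hau : IsApproximateUnit dist u) :
    ∃ h : X → X → ℝ, IsNegativeType h ∧ MetricallyProperWith dist h := by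
  obtain ⟨hmem, happrox⟩ := hau
  -- cutoff functions belong to C₀
  have hcut : ∀ k : ℕ, MemC0Delta dist (fun (x y : X) => if dist x y ≤ (k : ℝ) then (1:ℂ) else 0) := by
    intro k
    constructor
    · exact ⟨1, fun x y => by dsimp only; split <;> simp⟩
    · intro ε hε
      refine ⟨(k : ℝ) + 1, by positivity, fun x y hxy => ?_⟩
      dsimp only
      rw [if_neg (by linarith)]
      simpa using hε
  -- select a subsequence close to 1 near the diagonal
  have hsel : ∀ k : ℕ, ∃ n : ℕ, ∀ x y, dist x y ≤ (k : ℝ) → ‖u n x y - 1‖ < (1/2 : ℝ)^k := by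
    intro k
    obtain ⟨N, hN⟩ := happrox _ (hcut k) ((1/2 : ℝ)^k) (by positivity)
    refine ⟨N, fun x y hxy => ?_⟩
    have := hN N le_rfl x y
    rwa [if_pos hxy, mul_one] at this
  choose ν hν using hsel
  set φ : ℕ → X → X → ℂ := fun k => u (ν k) with hφ
  -- radii of decay
  have hRk : ∀ k : ℕ, ∃ R > 0, ∀ x y, dist x y > R → ‖φ k x y‖ < 1/4 :=
    fun k => (hmem (ν k)).2 (1/4) (by norm_num)
  choose Rk hRkpos hRklt using hRk
  -- the building blocks
  set t : ℕ → X → X → ℝ := fun k x y =>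
    (φ k x x).re + (φ k y y).re - (φ k x y).re - (φ k y x).re with ht
  have htnonneg : ∀ k x y, 0 ≤ t k x y := fun k x y => posdef_two (hpd (ν k)) x y
  have hre_lb : ∀ (k : ℕ) (x y : X), dist x y ≤ (k : ℝ) → 1 - (1/2:ℝ)^k ≤ (φ k x y).re := by
    intro k x y hxy
    have h1 := hν k x y hxy
    have h2 : |(φ k x y - 1).re| ≤ ‖φ k x y - 1‖ := by
      exact Complex.abs_re_le_norm _
    have h3 : (φ k x y - 1).re = (φ k x y).re - 1 := by
      simp [Complex.sub_re]
    rw [h3] at h2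
    have := abs_le.mp (le_of_lt (lt_of_le_of_lt h2 h1))
    linarith [this.1]
  have hre_ub : ∀ (k : ℕ) (x y : X), dist x y ≤ (k : ℝ) → (φ k x y).re ≤ 1 + (1/2:ℝ)^k := by
    intro k x y hxy
    have h1 := hν k x y hxy
    have h2 : |(φ k x y - 1).re| ≤ ‖φ k x y - 1‖ := by
      exact Complex.abs_re_le_norm _
    have h3 : (φ k x y - 1).re = (φ k x y).re - 1 := by
      simp [Complex.sub_re]
    rw [h3] at h2
    have := abs_le.mp (le_of_lt (lt_of_le_of_lt h2 h1))
    linarith [this.2]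
  have hdxx : ∀ (x : X) (k : ℕ), dist x x ≤ (k : ℝ) := by
    intro x k; rw [dist_self]; exact Nat.cast_nonneg k
  have htbound : ∀ (k : ℕ) (x y : X), dist x y ≤ (k : ℝ) → t k x y ≤ 4 * (1/2:ℝ)^k := by
    intro k x y hxy
    have hyx : dist y x ≤ (k : ℝ) := by rwa [dist_comm]
    have b1 := hre_ub k x x (hdxx x k)
    have b2 := hre_ub k y y (hdxx y k)
    have b3 := hre_lb k x y hxy
    have b4 := hre_lb k y x hyx
    simp only [ht]
    linarith
  -- summability
  have hsummable : ∀ x y, Summable (fun k => t k x y) := by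
    intro x y
    rw [← summable_nat_add_iff ⌈dist x y⌉₊]
    have hgeo : Summable (fun k : ℕ => 4 * (1/2:ℝ)^(k + ⌈dist x y⌉₊)) := by
      simp_rw [pow_add]
      exact ((summable_geometric_of_lt_one (by norm_num) (by norm_num)).mul_right _).mul_left 4
    refine Summable.of_nonneg_of_le (fun k => htnonneg _ x y) (fun k => ?_) hgeo
    refine htbound (k + ⌈dist x y⌉₊) x y ?_
    calc dist x y ≤ (⌈dist x y⌉₊ : ℝ) := Nat.le_ceil _
      _ ≤ ((k + ⌈dist x y⌉₊ : ℕ) : ℝ) := by exact_mod_cast Nat.le_add_left _ _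
  set h : X → X → ℝ := fun x y => ∑' k, t k x y with hh
  refine ⟨h, ⟨?_, ?_, ?_⟩, ?_⟩
  · -- h x x = 0
    intro x
    have : ∀ k, t k x x = 0 := fun k => by simp only [ht]; ring
    simp only [hh]
    rw [tsum_congr this, tsum_zero]
  · -- symmetry
    intro x y
    simp only [hh]
    exact tsum_congr fun k => by simp only [ht]; ring
  · -- negative type inequality
    intro n x a ha
    have hterm : ∀ k, (∑ i, ∑ j, a i * t k (x i) (x j) * a j) ≤ 0 := by
      intro k
      have hq1 := posdef_re_quad (hpd (ν k)) n x a
      have hq2 : 0 ≤ ∑ i, ∑ j, a i * (φ k (x j) (x i)).re * a j := by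
        rw [Finset.sum_comm]
        calc (0:ℝ) ≤ ∑ i, ∑ j, a i * (φ k (x i) (x j)).re * a j := hq1
          _ = ∑ j, ∑ i, a i * (φ k (x j) (x i)).re * a j := by
              refine Finset.sum_congr rfl fun i _ => Finset.sum_congr rfl fun j _ => by ring
      have hsplit : ∀ i, (∑ j, a i * t k (x i) (x j) * a j)
          = a i * (φ k (x i) (x i)).re * (∑ j, a j)
            + a i * (∑ j, (φ k (x j) (x j)).re * a j)
            - (∑ j, a i * (φ k (x i) (x j)).re * a j)
            - (∑ j, a i * (φ k (x j) (x i)).re * a j) := by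
        intro i
        rw [Finset.mul_sum, Finset.mul_sum, ← Finset.sum_add_distrib,
          ← Finset.sum_sub_distrib, ← Finset.sum_sub_distrib]
        exact Finset.sum_congr rfl fun j _ => by simp only [ht]; ring
      calc (∑ i, ∑ j, a i * t k (x i) (x j) * a j)
          = ∑ i, (a i * (φ k (x i) (x i)).re * (∑ j, a j)
            + a i * (∑ j, (φ k (x j) (x j)).re * a j)
            - (∑ j, a i * (φ k (x i) (x j)).re * a j)
            - (∑ j, a i * (φ k (x j) (x i)).re * a j)) :=
            Finset.sum_congr rfl fun i _ => hsplit i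
        _ = (∑ i, a i * (φ k (x i) (x i)).re * (∑ j, a j))
            + (∑ i, a i) * (∑ j, (φ k (x j) (x j)).re * a j)
            - (∑ i, ∑ j, a i * (φ k (x i) (x j)).re * a j)
            - (∑ i, ∑ j, a i * (φ k (x j) (x i)).re * a j) := by
            rw [Finset.sum_sub_distrib, Finset.sum_sub_distrib, Finset.sum_add_distrib,
              Finset.sum_mul]
        _ ≤ 0 := by
            rw [ha]
            simp only [mul_zero, zero_mul, Finset.sum_const_zero]
            linarith
    have hsum1 : ∀ i j, Summable (fun k => a i * t k (x i) (x j) * a j) :=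
      fun i j => ((hsummable (x i) (x j)).mul_left (a i)).mul_right (a j)
    have step2 : ∀ i, (∑ j, a i * h (x i) (x j) * a j)
        = ∑' k, ∑ j, a i * t k (x i) (x j) * a j := by
      intro i
      rw [Summable.tsum_finsetSum (fun j _ => hsum1 i j)]
      refine Finset.sum_congr rfl fun j _ => ?_
      simp only [hh]
      rw [← tsum_mul_left, ← tsum_mul_right]
    have step3 : (∑ i, ∑ j, a i * h (x i) (x j) * a j)
        = ∑' k, ∑ i, ∑ j, a i * t k (x i) (x j) * a j := by
      rw [Summable.tsum_finsetSum (fun i _ => summable_sum (fun j _ => hsum1 i j))]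
      exact Finset.sum_congr rfl fun i _ => step2 i
    rw [step3]
    exact tsum_nonpos hterm
  · -- metrically proper
    intro C hC
    set m : ℕ := ⌈2*C⌉₊ + 1 with hm
    refine ⟨1 + ∑ k ∈ Finset.Icc 1 m, Rk k, ?_, fun x y hxy => ?_⟩
    · have : 0 ≤ ∑ k ∈ Finset.Icc 1 m, Rk k :=
        Finset.sum_nonneg fun k _ => (hRkpos k).le
      linarith
    · have hdk : ∀ k ∈ Finset.Icc 1 m, dist x y > Rk k := by
        intro k hk
        have : Rk k ≤ ∑ k ∈ Finset.Icc 1 m, Rk k :=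
          Finset.single_le_sum (fun i _ => (hRkpos i).le) hk
        linarith
      have hlow : ∀ k ∈ Finset.Icc 1 m, (1/2 : ℝ) ≤ t k x y := by
        intro k hk
        obtain ⟨hk1, _⟩ := Finset.mem_Icc.mp hk
        have b1 := hre_lb k x x (hdxx x k)
        have b2 := hre_lb k y y (hdxx y k)
        have b3 : (φ k x y).re ≤ 1/4 := by
          have := hRklt k x y (hdk k hk)
          have h2 : (φ k x y).re ≤ ‖φ k x y‖ := by
            exact Complex.re_le_norm _
          linarith
        have b4 : (φ k y x).re ≤ 1/4 := by
          have := hRklt k y x (by rw [dist_comm]; exact hdk k hk)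
          have h2 : (φ k y x).re ≤ ‖φ k y x‖ := by
            exact Complex.re_le_norm _
          linarith
        have hkpow : (1/2:ℝ)^k ≤ 1/2 := by
          calc (1/2:ℝ)^k ≤ (1/2:ℝ)^1 :=
            pow_le_pow_of_le_one (by norm_num) (by norm_num) hk1
          _ = 1/2 := pow_one _
        simp only [ht]
        linarith
      have hsum_ge : ∑ k ∈ Finset.Icc 1 m, t k x y ≤ h x y :=
        Summable.sum_le_tsum _ (fun k _ => htnonneg k x y) (hsummable x y)
      have hcard : (Finset.Icc 1 m).card = m := by
        rw [Nat.card_Icc]; omega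
      have hsumlow : (m : ℝ) * (1/2) ≤ ∑ k ∈ Finset.Icc 1 m, t k x y := by
        calc (m : ℝ) * (1/2) = ∑ _k ∈ Finset.Icc 1 m, (1/2 : ℝ) := by
              rw [Finset.sum_const, hcard, nsmul_eq_mul]
          _ ≤ _ := Finset.sum_le_sum hlow
      have hCm : C < (m : ℝ) * (1/2) := by
        have h1 : 2*C ≤ (⌈2*C⌉₊ : ℝ) := Nat.le_ceil _
        have h2 : (m : ℝ) = (⌈2*C⌉₊ : ℝ) + 1 := by rw [hm]; push_cast; ring
        linarith
      have hpos : 0 ≤ h x y := tsum_nonneg (fun k => htnonneg k x y)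
      rw [Real.norm_eq_abs, abs_of_nonneg hpos]
      linarith
end

section
/- Let X be a discrete metric space and let (u_n) be a sequence of functions X × X → ℂ which is uniformly bounded (there is M with |u_n(x,y)| ≤ M for all n, x, y). Then ‖u_n·f − f‖_∞ → 0 for every f ∈ C₀(X×X;Δ) if and only if u_n converges to the constant function 1 uniformly on B_Δ(R) for every R > 0. -/
open scoped ComplexConjugate ComplexOrder

theorem approximate_unit_iff_uniform_convergence_near_diagonal
    (X : Type*) [MetricSpace X] [DiscreteTopology X]
    (u : ℕ → X → X → ℂ) (M : ℝ) (hM : ∀ n x y, ‖u n x y‖ ≤ M) :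
    (∀ f, MemC0Delta dist f → ∀ ε > 0, ∃ N, ∀ n ≥ N, ∀ x y : X,
        ‖u n x y * f x y - f x y‖ < ε) ↔
      (∀ R > 0, ∀ ε > 0, ∃ N, ∀ n ≥ N, ∀ x y : X, dist x y < R → ‖u n x y - 1‖ < ε) := by
  constructor
  · intro h R hR ε hε
    set f : X → X → ℂ := fun x y => ((max 0 (min 1 (R + 1 - dist x y)) : ℝ) : ℂ) with hf
    have hmem : MemC0Delta dist f := by
      constructor
      · refine ⟨1, fun x y => ?_⟩
        rw [hf]
        simp only [Complex.norm_real, Real.norm_eq_abs]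
        rw [abs_of_nonneg (le_max_left _ _)]
        exact max_le (by norm_num) (min_le_left _ _)
      · intro ε' hε'
        refine ⟨R + 1, by linarith, fun x y hxy => ?_⟩
        have h0 : min 1 (R + 1 - dist x y) ≤ 0 := le_trans (min_le_right _ _) (by linarith)
        have : f x y = 0 := by rw [hf]; simp [max_eq_left h0]
        rw [this]; simpa using hε'
    obtain ⟨N, hN⟩ := h f hmem ε hε
    refine ⟨N, fun n hn x y hxy => ?_⟩
    have hf1 : f x y = 1 := by
      have h1 : min 1 (R + 1 - dist x y) = 1 := min_eq_left (by linarith)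
      rw [hf]; simp [h1]
    have := hN n hn x y
    rwa [hf1, mul_one] at this
  · intro h f hf ε hε
    obtain ⟨⟨Mf, hMf⟩, hdecay⟩ := hf
    set Mf' := max Mf 0 + 1 with hMf'
    have hMf'pos : 0 < Mf' := by have := le_max_right Mf 0; simp [hMf']; linarith
    have hMabs : 0 < |M| + 2 := by positivity
    obtain ⟨R, hRpos, hR⟩ := hdecay (ε / (|M| + 2)) (by positivity)
    obtain ⟨N, hN⟩ := h (R + 1) (by linarith) (ε / Mf') (by positivity)
    refine ⟨N, fun n hn x y => ?_⟩
    have key : ‖u n x y * f x y - f x y‖ = ‖u n x y - 1‖ * ‖f x y‖ := by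
      rw [← norm_mul, sub_mul, one_mul]
    rw [key]
    by_cases hxy : dist x y < R + 1
    · have h1 : ‖u n x y - 1‖ < ε / Mf' := hN n hn x y hxy
      have h2 : ‖f x y‖ ≤ Mf' := by
        have := hMf x y
        have := le_max_left Mf 0
        rw [hMf']; linarith
      calc ‖u n x y - 1‖ * ‖f x y‖ ≤ ‖u n x y - 1‖ * Mf' :=
            mul_le_mul_of_nonneg_left h2 (norm_nonneg _)
        _ < (ε / Mf') * Mf' := mul_lt_mul_of_pos_right h1 hMf'pos
        _ = ε := div_mul_cancel₀ _ (ne_of_gt hMf'pos)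
    · have hfar : dist x y > R := by push_neg at hxy; linarith
      have h1 : ‖f x y‖ < ε / (|M| + 2) := hR x y hfar
      have h2 : ‖u n x y - 1‖ ≤ |M| + 2 := by
        calc ‖u n x y - 1‖ ≤ ‖u n x y‖ + ‖(1 : ℂ)‖ := norm_sub_le _ _
          _ ≤ M + 1 := by have := hM n x y; rw [norm_one]; linarith
          _ ≤ |M| + 2 := by have := le_abs_self M; linarith
      calc ‖u n x y - 1‖ * ‖f x y‖ ≤ (|M| + 2) * ‖f x y‖ :=
            mul_le_mul_of_nonneg_right h2 (norm_nonneg _)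
        _ < (|M| + 2) * (ε / (|M| + 2)) := mul_lt_mul_of_pos_left h1 hMabs
        _ = ε := mul_div_cancel₀ _ (ne_of_gt hMabs)
end

section
/- Let Γ be a group, λ its left regular representation on ℓ²(Γ), and C*_r(Γ) the reduced group C*-algebra, realized as the operator-norm closure in B(ℓ²(Γ)) of the *-subalgebra generated by {λ(g) : g ∈ Γ}. If T : C*_r(Γ) → B(ℓ²(Γ)) is a unital completely positive linear map, then the function u_T : Γ × Γ → ℂ defined by u_T(s,t) = ⟨δ_s, T(λ(s·t⁻¹)) δ_t⟩ is positive definite. -/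
noncomputable section

open scoped ComplexConjugate ComplexOrder ENNReal

/-- `ℓ²(Γ)`, the Hilbert space of square-summable families of complex numbers indexed by `Γ`. -/
abbrev L2 (Γ : Type*) : Type _ := lp (fun _ : Γ => ℂ) 2

/-- The standard orthonormal basis vector `δ_t` of `ℓ²(Γ)`. -/
def dirac {Γ : Type*} (t : Γ) : L2 Γ :=
  letI := Classical.decEq Γ
  lp.single 2 t 1

lemma memℓp_translate {Γ : Type*} [Group Γ] (g : Γ) (f : L2 Γ) :
    Memℓp (fun s => f (g⁻¹ * s)) (2 : ℝ≥0∞) :=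
  memℓp_gen (by
    simpa [Function.comp_def] using ((Equiv.mulLeft g⁻¹).summable_iff
      (f := fun s => ‖f s‖ ^ (2 : ℝ≥0∞).toReal)).2
      ((memℓp_gen_iff (by norm_num)).1 (lp.memℓp f)))

/-- The left regular representation of `Γ` on `ℓ²(Γ)`, as a linear isometric bijection:
`(lamE g f) s = f (g⁻¹ s)`, so that `lamE g (dirac t) = dirac (g * t)`. -/
def lamE {Γ : Type*} [Group Γ] (g : Γ) : L2 Γ ≃ₗᵢ[ℂ] L2 Γ where
  toFun f := ⟨fun s => f (g⁻¹ * s), memℓp_translate g f⟩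
  invFun f := ⟨fun s => f (g * s), by
    have h := memℓp_translate g⁻¹ f
    simp only [inv_inv] at h
    exact h⟩
  map_add' f₁ f₂ := by ext s; simp [lp.coeFn_add, Pi.add_apply]; rfl
  map_smul' c f := by ext s; simp [lp.coeFn_smul, Pi.smul_apply]
  left_inv f := by ext s; simp
  right_inv f := by ext s; simp
  norm_map' f := by
    rw [lp.norm_eq_tsum_rpow (by norm_num) _, lp.norm_eq_tsum_rpow (by norm_num) f]
    congr 1
    simpa using (Equiv.mulLeft g⁻¹).tsum_eq (f := fun s => ‖f s‖ ^ (2 : ℝ≥0∞).toReal)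

/-- The left regular representation as bounded operators on `ℓ²(Γ)`. -/
def lam {Γ : Type*} [Group Γ] (g : Γ) : L2 Γ →L[ℂ] L2 Γ :=
  (lamE g).toLinearIsometry.toContinuousLinearMap

/-- The reduced group C*-algebra of `Γ`: the operator-norm closure in `B(ℓ²(Γ))` of the
*-subalgebra generated by the operators of the left regular representation. -/
def reducedGroupCstar (Γ : Type*) [Group Γ] : StarSubalgebra ℂ (L2 Γ →L[ℂ] L2 Γ) :=
  (StarAlgebra.adjoin ℂ (Set.range (lam (Γ := Γ)))).topologicalClosure

lemma lam_mem_reducedGroupCstar {Γ : Type*} [Group Γ] (g : Γ) :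
    lam g ∈ reducedGroupCstar Γ :=
  (StarAlgebra.adjoin ℂ (Set.range (lam (Γ := Γ)))).le_topologicalClosure
    (StarAlgebra.subset_adjoin ℂ _ ⟨g, rfl⟩)

/-- The operator `λ(g)` as an element of the reduced group C*-algebra. -/
def lamRed {Γ : Type*} [Group Γ] (g : Γ) : reducedGroupCstar Γ :=
  ⟨lam g, lam_mem_reducedGroupCstar g⟩
/-- The `n × n` operator matrix `A` defines a positive operator on the `n`-fold Hilbert space
direct sum: the associated quadratic form `Σ_{i,j} ⟨v_j, A_{ij} v_i⟩` is nonnegative. -/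
def MatrixPositive {H : Type*} [NormedAddCommGroup H] [InnerProductSpace ℂ H]
    {n : ℕ} (A : Fin n → Fin n → (H →L[ℂ] H)) : Prop :=
  ∀ v : Fin n → H, 0 ≤ ∑ i, ∑ j, (inner ℂ (v j) (A i j (v i)) : ℂ)
/-- `T` is a unital completely positive map from the reduced group C*-algebra into
`B(ℓ²(Γ))`. -/
def IsUCP {Γ : Type*} [Group Γ]
    (T : reducedGroupCstar Γ →ₗ[ℂ] (L2 Γ →L[ℂ] L2 Γ)) : Prop :=
  T 1 = 1 ∧
    ∀ (n : ℕ) (A : Fin n → Fin n → reducedGroupCstar Γ),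
      MatrixPositive (fun i j => (A i j : L2 Γ →L[ℂ] L2 Γ)) →
        MatrixPositive (fun i j => T (A i j))

/-- The matrix coefficient function `u_T (s,t) = ⟨δ_s, T(λ(s t⁻¹)) δ_t⟩` associated to a map `T`
defined on the reduced group C*-algebra. -/
def matrixCoeff {Γ : Type*} [Group Γ]
    (T : reducedGroupCstar Γ → (L2 Γ →L[ℂ] L2 Γ)) (s t : Γ) : ℂ :=
  inner ℂ (dirac s) ((T (lamRed (s * t⁻¹))) (dirac t))

-- auxiliary
lemma lam_comp {Γ : Type*} [Group Γ] (g h : Γ) (v : L2 Γ) :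
    lam (g * h) v = lamE g (lamE h v) := by
  ext s
  simp [lam, lamE, mul_assoc]

lemma lamE_symm {Γ : Type*} [Group Γ] (g : Γ) (v : L2 Γ) :
    (lamE g).symm v = lamE g⁻¹ v := by
  ext s
  show v (g * s) = v (g⁻¹⁻¹ * s)
  rw [inv_inv]

lemma inner_self_nonneg_complex {H : Type*} [NormedAddCommGroup H]
    [InnerProductSpace ℂ H] (x : H) : (0 : ℂ) ≤ inner ℂ x x := by
  rw [RCLike.nonneg_iff]
  exact ⟨inner_self_nonneg, inner_self_im x⟩

lemma lamMatrixPositive {Γ : Type*} [Group Γ] {n : ℕ} (s : Fin n → Γ) :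
    MatrixPositive (fun i j => ((lamRed (s j * (s i)⁻¹) : reducedGroupCstar Γ) :
      L2 Γ →L[ℂ] L2 Γ)) := by
  intro v
  have key : ∀ i j, (inner ℂ (v j) (lam (s j * (s i)⁻¹) (v i)) : ℂ)
      = inner ℂ (lamE (s j)⁻¹ (v j)) (lamE (s i)⁻¹ (v i)) := by
    intro i j
    have h1 : lam (s j * (s i)⁻¹) (v i) = lamE (s j) (lamE (s i)⁻¹ (v i)) := lam_comp _ _ _
    have h2 : v j = lamE (s j) (lamE (s j)⁻¹ (v j)) := by
      rw [← lamE_symm]; simp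
    rw [h1]
    conv_lhs => rw [h2]
    exact (lamE (s j)).inner_map_map _ _
  calc (0 : ℂ) ≤ inner ℂ (∑ j, lamE (s j)⁻¹ (v j)) (∑ i, lamE (s i)⁻¹ (v i)) :=
        inner_self_nonneg_complex _
    _ = ∑ i, ∑ j, (inner ℂ (v j) (lam (s j * (s i)⁻¹) (v i)) : ℂ) := by
        rw [inner_sum]
        refine Finset.sum_congr rfl fun i _ => ?_
        rw [sum_inner]
        exact Finset.sum_congr rfl fun j _ => (key i j).symm

theorem matrixCoeff_posdef_of_ucp {Γ : Type*} [Group Γ]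
    (T : reducedGroupCstar Γ →ₗ[ℂ] (L2 Γ →L[ℂ] L2 Γ)) (hT : IsUCP T) :
    IsPositiveDefinite (matrixCoeff (fun a => T a)) := by
  intro n s z
  have hpos := hT.2 n (fun i j => lamRed (s j * (s i)⁻¹)) (lamMatrixPositive s)
  have h := hpos (fun i => z i • dirac (s i))
  have heq : ∀ i j, (inner ℂ (z j • dirac (s j))
      (T (lamRed (s j * (s i)⁻¹)) (z i • dirac (s i))) : ℂ)
      = conj (z j) * matrixCoeff (fun a => T a) (s j) (s i) * z i := by
    intro i j
    rw [map_smul, inner_smul_left, inner_smul_right, matrixCoeff]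
    ring
  rw [Finset.sum_comm]
  calc (0:ℂ) ≤ ∑ i, ∑ j, (inner ℂ ((fun i => z i • dirac (s i)) j)
        (T (lamRed (s j * (s i)⁻¹)) ((fun i => z i • dirac (s i)) i)) : ℂ) := h
    _ = ∑ i, ∑ j, conj (z j) * matrixCoeff (fun a => T a) (s j) (s i) * z i := by
        exact Finset.sum_congr rfl fun i _ => Finset.sum_congr rfl fun j _ => heq i j
end
end

section
/- Let Γ be a group and βΓ the Stone–Čech compactification of the discrete space Γ, with the extended right translation action of Γ. Let f : Γ × Γ → ℂ be a function such that s ↦ f(s, s·t) is bounded for each fixed t ∈ Γ, and let α*(f) : βΓ × Γ → ℂ be defined by letting α*(f)(·, t) be the continuous extension to βΓ of s ↦ f(s, s·t). If f is positive definite on Γ × Γ, then α*(f) is positive definite on the groupoid βΓ⋊Γ: for every x ∈ βΓ, s_1, …, s_n ∈ Γ and z_1, …, z_n ∈ ℂ, the sum Σ_{i,j} conj(z_i)·α*(f)(x·s_i, s_i⁻¹·s_j)·z_j is a nonnegative real number. -/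
noncomputable section

open scoped ComplexConjugate ComplexOrder

/-- Right translation by `t ∈ Γ` on the Stone–Čech compactification of the discrete space `Γ`:
the continuous extension of `s ↦ ι(s·t)`. -/
def rightTranslate {Γ : Type*} [Group Γ] [TopologicalSpace Γ] [DiscreteTopology Γ] (t : Γ)
    (x : StoneCech Γ) : StoneCech Γ :=
  stoneCechExtend (continuous_of_discreteTopology (f := fun s : Γ => stoneCechUnit (s * t))) x

/-- A function on the transformation groupoid `βΓ ⋊ Γ` is positive definite. -/
def GroupoidPosDef {Γ : Type*} [Group Γ] [TopologicalSpace Γ] [DiscreteTopology Γ]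
    (φ : StoneCech Γ → Γ → ℂ) : Prop :=
  ∀ (x : StoneCech Γ) (n : ℕ) (s : Fin n → Γ) (z : Fin n → ℂ),
    0 ≤ ∑ i, ∑ j, conj (z i) * φ (rightTranslate (s i) x) ((s i)⁻¹ * s j) * z j

/-- A function on the transformation groupoid `βΓ ⋊ Γ` is of negative type. -/
def GroupoidNegType {Γ : Type*} [Group Γ] [TopologicalSpace Γ] [DiscreteTopology Γ]
    (ψ : StoneCech Γ → Γ → ℝ) : Prop :=
  (∀ x : StoneCech Γ, ψ x 1 = 0) ∧
    (∀ (x : StoneCech Γ) (s t : Γ),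
      ψ (rightTranslate s x) (s⁻¹ * t) = ψ (rightTranslate t x) (t⁻¹ * s)) ∧
    ∀ (x : StoneCech Γ) (n : ℕ) (s : Fin n → Γ) (a : Fin n → ℝ),
      (∑ j, a j) = 0 →
        (∑ i, ∑ j, a i * ψ (rightTranslate (s i) x) ((s i)⁻¹ * s j) * a j) ≤ 0

/-- A function on `βΓ ⋊ Γ` is proper: it is large off `βΓ × F` for finite sets `F ⊆ Γ`. -/
def GroupoidProper {Γ : Type*} [Group Γ] [TopologicalSpace Γ] [DiscreteTopology Γ]
    (ψ : StoneCech Γ → Γ → ℝ) : Prop :=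
  ∀ C > 0, ∃ F : Finset Γ, ∀ (x : StoneCech Γ) (t : Γ), t ∉ F → C < |ψ x t|

/-- Membership in `C₀(βΓ ⋊ Γ)`: continuous in the `βΓ`-variable, and uniformly small off
`βΓ × F` for finite sets `F ⊆ Γ`. -/
def MemC0Groupoid {Γ : Type*} [Group Γ] [TopologicalSpace Γ] [DiscreteTopology Γ]
    (φ : StoneCech Γ → Γ → ℂ) : Prop :=
  (∀ t : Γ, Continuous fun x => φ x t) ∧
    ∀ ε > 0, ∃ F : Finset Γ, ∀ (x : StoneCech Γ) (t : Γ), t ∉ F → ‖φ x t‖ < ε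

/-- A sequence in `C₀(βΓ ⋊ Γ)` is an approximate unit for `C₀(βΓ ⋊ Γ)`. -/
def GroupoidApproxUnit {Γ : Type*} [Group Γ] [TopologicalSpace Γ] [DiscreteTopology Γ]
    (u : ℕ → StoneCech Γ → Γ → ℂ) : Prop :=
  (∀ n, MemC0Groupoid (u n)) ∧
    ∀ φ, MemC0Groupoid φ → ∀ ε > 0, ∃ N, ∀ n ≥ N, ∀ (x : StoneCech Γ) (t : Γ),
      ‖u n x t * φ x t - φ x t‖ < ε
theorem extension_posdef_of_posdef {Γ : Type*} [Group Γ]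
    [TopologicalSpace Γ] [DiscreteTopology Γ]
    (f : Γ → Γ → ℂ) (hb : ∀ t : Γ, ∃ M, ∀ s : Γ, ‖f s (s * t)‖ ≤ M)
    (F : StoneCech Γ → Γ → ℂ)
    (hFcont : ∀ t : Γ, Continuous fun x => F x t)
    (hFext : ∀ s t : Γ, F (stoneCechUnit s) t = f s (s * t))
    (hf : IsPositiveDefinite f) :
    GroupoidPosDef F := by
  intro x n s z
  have hrt : ∀ (t a : Γ), rightTranslate t (stoneCechUnit a) = stoneCechUnit (a * t) := by
    intro t a
    exact congrFun (stoneCechExtend_extends (continuous_of_discreteTopology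
      (f := fun s : Γ => stoneCechUnit (s * t)))) a
  have hcont : Continuous fun x : StoneCech Γ =>
      ∑ i, ∑ j, conj (z i) * F (rightTranslate (s i) x) ((s i)⁻¹ * s j) * z j := by
    refine continuous_finset_sum _ fun i _ => continuous_finset_sum _ fun j _ => ?_
    exact (continuous_const.mul ((hFcont _).comp
      (continuous_stoneCechExtend _))).mul continuous_const
  refine DenseRange.induction_on denseRange_stoneCechUnit x
    (isClosed_le continuous_const hcont) fun a => ?_
  have : ∀ i j, F (rightTranslate (s i) (stoneCechUnit a)) ((s i)⁻¹ * s j)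
      = f (a * s i) (a * s j) := by
    intro i j
    rw [hrt, hFext]
    congr 1
    group
  simp only [this]
  exact hf n (fun i => a * s i) z
end
end

section
/- Let Γ be a group and βΓ the Stone–Čech compactification of the discrete space Γ, with the extended right translation action of Γ. Let h : Γ × Γ → ℝ be a function such that s ↦ h(s, s·t) is bounded for each fixed t ∈ Γ, and let α*(h) : βΓ × Γ → ℝ be defined by letting α*(h)(·, t) be the continuous extension to βΓ of s ↦ h(s, s·t). If h is of negative type on Γ × Γ, then α*(h) is of negative type on the groupoid βΓ⋊Γ: α*(h)(x, e) = 0 for all x ∈ βΓ; α*(h)(x·s, s⁻¹·t) = α*(h)(x·t, t⁻¹·s) for all x ∈ βΓ and s, t ∈ Γ; and Σ_{i,j} a_i·α*(h)(x·s_i, s_i⁻¹·s_j)·a_j ≤ 0 for all x ∈ βΓ, s_1, …, s_n ∈ Γ and a_1, …, a_n ∈ ℝ with Σ_j a_j = 0. -/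
noncomputable section

open scoped ComplexConjugate ComplexOrder

theorem extension_negative_type_of_negative_type {Γ : Type*} [Group Γ]
    [TopologicalSpace Γ] [DiscreteTopology Γ]
    (h : Γ → Γ → ℝ) (hb : ∀ t : Γ, ∃ M, ∀ s : Γ, |h s (s * t)| ≤ M)
    (H : StoneCech Γ → Γ → ℝ)
    (hHcont : ∀ t : Γ, Continuous fun x => H x t)
    (hHext : ∀ s t : Γ, H (stoneCechUnit s) t = h s (s * t))
    (hh : IsNegativeType h) :
    GroupoidNegType H := by
  have hrt : ∀ (t : Γ) (s : Γ), rightTranslate t (stoneCechUnit s) = stoneCechUnit (s * t) := by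
    intro t s
    exact congrFun (stoneCechExtend_extends (continuous_of_discreteTopology
      (f := fun s : Γ => stoneCechUnit (s * t)))) s
  have hrtc : ∀ t : Γ, Continuous (rightTranslate (Γ := Γ) t) := fun t =>
    continuous_stoneCechExtend _
  obtain ⟨h0, hsym, hneg⟩ := hh
  refine ⟨?_, ?_, ?_⟩
  · intro x
    refine DenseRange.induction_on denseRange_stoneCechUnit x
      (isClosed_eq (hHcont 1) continuous_const) (fun s => ?_)
    rw [hHext, mul_one, h0]
  · intro x s t
    refine DenseRange.induction_on denseRange_stoneCechUnit x
      (isClosed_eq ((hHcont _).comp (hrtc s)) ((hHcont _).comp (hrtc t))) (fun u => ?_)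
    simp only [hrt, hHext]
    rw [mul_assoc, mul_assoc, mul_inv_cancel_left, mul_inv_cancel_left]
    exact hsym _ _
  · intro x n s a ha
    refine DenseRange.induction_on denseRange_stoneCechUnit x
      (isClosed_le (continuous_finset_sum _ fun i _ => continuous_finset_sum _ fun j _ =>
        (continuous_const.mul ((hHcont ((s i)⁻¹ * s j)).comp (hrtc (s i)))).mul continuous_const) continuous_const) (fun u => ?_)
    have := hneg n (fun i => u * s i) a ha
    calc ∑ i, ∑ j, a i * H (rightTranslate (s i) (stoneCechUnit u)) ((s i)⁻¹ * s j) * a j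
        = ∑ i, ∑ j, a i * h (u * s i) (u * s j) * a j := by
          refine Finset.sum_congr rfl fun i _ => Finset.sum_congr rfl fun j _ => ?_
          rw [hrt, hHext, show u * s i * ((s i)⁻¹ * s j) = u * s j by group]
      _ ≤ 0 := this
end
end
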